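/- arXiv:0705.4662 — 4 statements merged into one kernel-verified Lean document; each statement's English description precedes it below -/
import Mathlib

section
/- There is a universal constant C > 0 with the following property. Let G be a finite Abelian (additive) group, ρ an invariant metric on G, and p ∈ (1, 2). Suppose D ≥ 1 and there exist a complex inner product space H and f : G → H with √(ρ(x, y)) ≤ ‖f(x) − f(y)‖ ≤ D·√(ρ(x, y)) for all x, y. Then there exist nonnegative reals (a_χ), indexed by the characters χ of G, such that for all x, y ∈ G: ρ(x, y) ≤ 4·D²·Σ_χ a_χ·|χ(x) − χ(y)|^p ≤ (C·D⁴/(p − 1))·ρ(x, y). Consequently (G, ρ^{1/p}) embeds into a weighted ℓ_p space over the characters with distortion O(D^{4/p}/(p − 1)). -/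
open Finset
open scoped ComplexConjugate

-- Bernoulli-type step via weighted AM-GM
lemma aux_step (p : ℝ) (hp1 : 1 < p) (hp2 : p < 2) (a : ℝ) (ha : 1 ≤ a) :
    (p - 1) * (a+1) ^ (-p) ≤ a^(1-p) - (a+1)^(1-p) := by
  set b : ℝ := a+1 with hb
  have ha0 : (0:ℝ) < a := by linarith
  have hb0 : (0:ℝ) < b := by rw [hb]; linarith
  set r : ℝ := a / b with hr
  have hr0 : 0 < r := by positivity
  have hr1 : r ≤ 1 := by
    rw [hr, div_le_one hb0]; rw [hb]; linarith
  have hamgm := Real.geom_mean_le_arith_mean2_weighted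
    (by linarith : (0:ℝ) ≤ p - 1) (by linarith : (0:ℝ) ≤ 2 - p)
    (le_of_lt hr0) (zero_le_one) (by ring)
  rw [Real.one_rpow, mul_one] at hamgm
  have h1 : r ^ (p-1) ≤ 1 - (p-1)*(1-r) := by linarith
  set u : ℝ := (p-1)*(1-r) with hu
  have hu0 : 0 ≤ u := by
    have h' : 0 ≤ 1 - r := by linarith
    have h'' : 0 ≤ p - 1 := by linarith
    positivity
  have h2 : r ^ (p-1) * (1 + u) ≤ 1 := by
    calc r ^ (p-1) * (1 + u) ≤ (1 - u) * (1 + u) := by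
          apply mul_le_mul_of_nonneg_right h1 (by linarith)
      _ = 1 - u^2 := by ring
      _ ≤ 1 := by nlinarith
  have h3 : 1 + u ≤ r ^ (1-p) := by
    have hpow : r ^ (p-1) * r ^ (1-p) = 1 := by
      rw [← Real.rpow_add hr0]; norm_num
    have hrp : 0 < r ^ (p-1) := Real.rpow_pos_of_pos hr0 _
    nlinarith [h2, hpow, hrp]
  have hab : a ^ (1-p) = r ^ (1-p) * b ^ (1-p) := by
    rw [hr, ← Real.mul_rpow (by positivity) (le_of_lt hb0), div_mul_cancel₀ _ (ne_of_gt hb0)]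
  have hbinv : 1 - r = 1 / b := by
    rw [hr, hb]; field_simp; ring
  have hbp : b ^ (-p) = b ^ (1-p) * (1/b) := by
    rw [one_div, ← Real.rpow_neg_one b, ← Real.rpow_add hb0]; ring_nf
  have hbppos : 0 < b ^ (1-p) := Real.rpow_pos_of_pos hb0 _
  calc (p-1) * b ^ (-p) = b ^ (1-p) * ((p-1) * (1-r)) := by
        rw [hbp, ← hbinv]; ring
    _ = b ^ (1-p) * u := by rw [hu]
    _ ≤ b ^ (1-p) * (r ^ (1-p) - 1) := by
        apply mul_le_mul_of_nonneg_left (by linarith) (le_of_lt hbppos)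
    _ = a ^ (1-p) - b ^ (1-p) := by rw [hab]; ring

lemma aux_zeta (p : ℝ) (hp1 : 1 < p) (hp2 : p < 2) (N : ℕ) :
    ∑ m ∈ Icc 1 N, (m:ℝ) ^ (-p) ≤ 2 / (p-1) := by
  have hp0 : (0:ℝ) < p - 1 := by linarith
  have hfin : (1:ℝ)/(p-1) ≤ 2/(p-1) - 1 := by
    rw [div_sub' (ne_of_gt hp0), div_le_div_iff₀ hp0 hp0]
    nlinarith
  rcases Nat.eq_zero_or_pos N with hN | hN
  · subst hN; simp; positivity
  have key : ∀ M : ℕ, 1 ≤ M →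
      ∑ m ∈ Icc 1 M, (m:ℝ) ^ (-p) ≤ 1 + (1/(p-1)) * (1 - (M:ℝ)^(1-p)) := by
    intro M hM
    induction M, hM using Nat.le_induction with
    | base => simp
    | succ M hM ih =>
      rw [Finset.sum_Icc_succ_top (by omega : 1 ≤ M + 1)]
      have hstep := aux_step p hp1 hp2 (M:ℝ) (by exact_mod_cast hM)
      have hcast : ((M:ℝ)+1) = ((M+1 : ℕ):ℝ) := by push_cast; ring
      rw [hcast] at hstep
      have h2 : ((M+1:ℕ):ℝ) ^ (-p) ≤ (1/(p-1)) * ((M:ℝ)^(1-p) - ((M+1:ℕ):ℝ)^(1-p)) := by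
        rw [div_mul_eq_mul_div, le_div_iff₀ hp0]; linarith
      calc ∑ m ∈ Icc 1 M, (m:ℝ) ^ (-p) + ((M+1:ℕ):ℝ) ^ (-p)
          ≤ (1 + (1/(p-1)) * (1 - (M:ℝ)^(1-p)))
            + (1/(p-1)) * ((M:ℝ)^(1-p) - ((M+1:ℕ):ℝ)^(1-p)) := by
            exact add_le_add ih h2
        _ = 1 + (1/(p-1)) * (1 - ((M+1:ℕ):ℝ)^(1-p)) := by ring
  have hNp : (0:ℝ) ≤ (N:ℝ)^(1-p) := Real.rpow_nonneg (Nat.cast_nonneg N) _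
  have h1 : (1/(p-1)) * (1 - (N:ℝ)^(1-p)) ≤ 1/(p-1) := by
    have : (1 - (N:ℝ)^(1-p)) ≤ 1 := by linarith
    have h2 : (0:ℝ) ≤ 1/(p-1) := by positivity
    nlinarith
  have := key N hN
  linarith

lemma abs_one_sub_sq (w : ℂ) (hw : ‖w‖ = 1) :
    ‖1 - w‖ ^ 2 = 2 - 2 * w.re := by
  have h1 : Complex.normSq w = 1 := by
    rw [← Complex.sq_norm, hw]; norm_num
  rw [Complex.sq_norm]
  simp only [Complex.normSq_apply, Complex.sub_re, Complex.sub_im, Complex.one_re,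
    Complex.one_im] at h1 ⊢
  nlinarith [h1]

lemma re_ge_half (w : ℂ) (hw : ‖w‖ = 1) (h : ‖1 - w‖ < 1) :
    1/2 < w.re := by
  have := abs_one_sub_sq w hw
  nlinarith [norm_nonneg (1 - w)]

lemma key_char (p : ℝ) (hp1 : 1 < p) (hp2 : p < 2) (N : ℕ) (hN : 0 < N) (z : ℂ)
    (hz : ‖z‖ = 1) (hzN : z ^ N = 1) :
    ‖1 - z‖ ^ p ≤ 4 * ∑ m ∈ Icc 1 N, (m:ℝ) ^ (-1-p) * ‖1 - z ^ m‖ ^ 2 := by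
  set t := ‖1 - z‖ with ht
  have ht0 : 0 ≤ t := norm_nonneg _
  have hterm : ∀ m ∈ Icc 1 N, 0 ≤ (m:ℝ)^(-1-p) * ‖1 - z^m‖^2 := by
    intro m hm
    have : (0:ℝ) ≤ (m:ℝ)^(-1-p) := Real.rpow_nonneg (Nat.cast_nonneg m) _
    positivity
  have hsum0 : 0 ≤ ∑ m ∈ Icc 1 N, (m:ℝ)^(-1-p) * ‖1 - z^m‖^2 :=
    Finset.sum_nonneg hterm
  rcases eq_or_lt_of_le ht0 with h0 | htpos
  · rw [← h0, Real.zero_rpow (by linarith : p ≠ 0)]; linarith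
  rcases le_or_gt 1 t with h1t | ht1
  · -- case 1 ≤ t : use the m = 1 term
    have hLHS : t ^ p ≤ t ^ (2:ℝ) := Real.rpow_le_rpow_of_exponent_le h1t (le_of_lt hp2)
    have h2 : t ^ (2:ℝ) = t^2 := by
      rw [← Real.rpow_natCast t 2]; norm_num
    have hone : (1:ℕ) ∈ Icc 1 N := mem_Icc.mpr ⟨le_refl 1, hN⟩
    have hsingle := Finset.single_le_sum hterm hone
    simp only [Nat.cast_one, Real.one_rpow, pow_one, one_mul] at hsingle
    calc ‖1 - z‖ ^ p = t ^ p := rfl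
      _ ≤ t^2 := by rw [← h2]; exact hLHS
      _ ≤ ∑ m ∈ Icc 1 N, (m:ℝ)^(-1-p) * ‖1 - z^m‖^2 := hsingle
      _ ≤ 4 * ∑ m ∈ Icc 1 N, (m:ℝ)^(-1-p) * ‖1 - z^m‖^2 := by linarith
  · -- case t < 1
    have hz1 : z ≠ 1 := by
      intro h; rw [ht, h] at htpos; simp at htpos
    set A := (Icc 1 N).filter (fun m => 1 ≤ ‖1 - z^m‖) with hA
    have hAne : A.Nonempty := by
      by_contra hcon
      rw [Finset.not_nonempty_iff_eq_empty] at hcon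
      have hall : ∀ m ∈ Icc 1 N, ‖1 - z^m‖ < 1 := by
        intro m hm
        by_contra hge; push_neg at hge
        have hmem : m ∈ A := mem_filter.mpr ⟨hm, hge⟩
        rw [hcon] at hmem; exact absurd hmem (notMem_empty m)
      have hgeom : ∑ m ∈ range N, z^m = 0 := by
        rw [geom_sum_eq hz1, hzN]; simp
      have hre : ∑ m ∈ range N, (z^m).re = 0 := by
        rw [← Complex.re_sum, hgeom]; rfl
      have hpos : 0 < ∑ m ∈ range N, (z^m).re := by
        apply Finset.sum_pos _ ⟨0, mem_range.mpr hN⟩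
        intro m hm
        rcases Nat.eq_zero_or_pos m with rfl | hm1
        · simp
        · have habs : ‖1 - z^m‖ < 1 :=
            hall m (mem_Icc.mpr ⟨hm1, le_of_lt (mem_range.mp hm)⟩)
          have := re_ge_half (z^m) (by rw [norm_pow, hz, one_pow]) habs
          linarith
      linarith
    set m₀ := A.min' hAne with hm₀def
    have hm₀A : m₀ ∈ A := Finset.min'_mem _ _
    have hm₀Icc : m₀ ∈ Icc 1 N := (mem_filter.mp hm₀A).1
    have hm₀1 : 1 ≤ m₀ := (mem_Icc.mp hm₀Icc).1
    have hm₀N : m₀ ≤ N := (mem_Icc.mp hm₀Icc).2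
    have hm₀abs : 1 ≤ ‖1 - z^m₀‖ := (mem_filter.mp hm₀A).2
    have hm₀pos : (0:ℝ) < (m₀:ℝ) := by exact_mod_cast hm₀1
    have hsmall : ∀ j, 1 ≤ j → j < m₀ → ‖1 - z^j‖ < 1 := by
      intro j hj1 hj2
      by_contra hge; push_neg at hge
      have hjA : j ∈ A := mem_filter.mpr ⟨mem_Icc.mpr ⟨hj1, by omega⟩, hge⟩
      have := Finset.min'_le A j hjA
      omega
    have hfac : ∀ k : ℕ, (1 - z^k) = (∑ j ∈ range k, z^j) * (1 - z) := by
      intro k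
      have h := geom_sum_mul z k
      linear_combination h
    have hrelow : ∀ k, k ≤ m₀ → (k:ℝ)/2 ≤ (∑ j ∈ range k, z^j).re := by
      intro k hk
      rw [Complex.re_sum]
      have hhalf : ∀ j ∈ range k, (1:ℝ)/2 ≤ (z^j).re := by
        intro j hj
        rcases Nat.eq_zero_or_pos j with rfl | hj1
        · simp; norm_num
        · have hjm : j < m₀ := lt_of_lt_of_le (mem_range.mp hj) hk
          have := re_ge_half (z^j) (by rw [norm_pow, hz, one_pow]) (hsmall j hj1 hjm)
          linarith
      calc (k:ℝ)/2 = ∑ _j ∈ range k, (1:ℝ)/2 := by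
            rw [Finset.sum_const, card_range, nsmul_eq_mul]; ring
        _ ≤ ∑ j ∈ range k, (z^j).re := Finset.sum_le_sum hhalf
    have hlow : ∀ k, k ≤ m₀ → (k:ℝ) * t / 2 ≤ ‖1 - z^k‖ := by
      intro k hk
      rw [hfac k, norm_mul]
      have h1 : (k:ℝ)/2 ≤ ‖∑ j ∈ range k, z^j‖ :=
        le_trans (hrelow k hk) (Complex.re_le_norm _)
      calc (k:ℝ) * t / 2 = ((k:ℝ)/2) * t := by ring
        _ ≤ ‖∑ j ∈ range k, z^j‖ * t :=
            mul_le_mul_of_nonneg_right h1 ht0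
        _ = ‖∑ j ∈ range k, z^j‖ * ‖1 - z‖ := by rw [ht]
    have hup : ‖1 - z^m₀‖ ≤ (m₀:ℝ) * t := by
      rw [hfac m₀, norm_mul]
      have habs : ‖∑ j ∈ range m₀, z^j‖ ≤ (m₀:ℝ) := by
        calc ‖∑ j ∈ range m₀, z^j‖ ≤ ∑ j ∈ range m₀, ‖z^j‖ :=
              norm_sum_le _ _
          _ = (m₀:ℝ) := by simp [norm_pow, hz]
      calc ‖∑ j ∈ range m₀, z^j‖ * ‖1 - z‖ ≤ (m₀:ℝ) * ‖1-z‖ :=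
            mul_le_mul_of_nonneg_right habs (norm_nonneg _)
        _ = (m₀:ℝ) * t := by rw [ht]
    have hm₀t : 1 ≤ (m₀:ℝ) * t := le_trans hm₀abs hup
    -- main computation
    have hsub : Icc 1 m₀ ⊆ Icc 1 N := Icc_subset_Icc le_rfl hm₀N
    have hstep2 : ∀ m ∈ Icc 1 m₀,
        (m₀:ℝ)^(1-p) * t^2 / 4 ≤ (m:ℝ)^(-1-p) * ‖1 - z^m‖^2 := by
      intro m hm
      obtain ⟨hm1, hmm₀⟩ := mem_Icc.mp hm
      have hmpos : (0:ℝ) < (m:ℝ) := by exact_mod_cast hm1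
      have habs2 : ((m:ℝ) * t / 2)^2 ≤ ‖1 - z^m‖^2 := by
        apply pow_le_pow_left₀ (by positivity) (hlow m hmm₀)
      have hmono : (m₀:ℝ)^(1-p) ≤ (m:ℝ)^(1-p) :=
        Real.rpow_le_rpow_of_nonpos hmpos (by exact_mod_cast hmm₀) (by linarith)
      have hmm : (m:ℝ)^(-1-p) * (m:ℝ)^2 = (m:ℝ)^(1-p) := by
        rw [← Real.rpow_natCast (m:ℝ) 2, ← Real.rpow_add hmpos]
        congr 1; push_cast; ring
      calc (m₀:ℝ)^(1-p) * t^2/4 ≤ (m:ℝ)^(1-p) * t^2/4 := by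
            have h2 : (0:ℝ) ≤ t^2/4 := by positivity
            calc (m₀:ℝ)^(1-p) * t^2/4 = (m₀:ℝ)^(1-p) * (t^2/4) := by ring
              _ ≤ (m:ℝ)^(1-p) * (t^2/4) := mul_le_mul_of_nonneg_right hmono h2
              _ = (m:ℝ)^(1-p) * t^2/4 := by ring
        _ = (m:ℝ)^(-1-p) * ((m:ℝ) * t/2)^2 := by
            rw [← hmm]; ring
        _ ≤ (m:ℝ)^(-1-p) * ‖1 - z^m‖^2 :=
            mul_le_mul_of_nonneg_left habs2 (Real.rpow_nonneg (le_of_lt hmpos) _)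
    have hcard : ∑ _m ∈ Icc 1 m₀, ((m₀:ℝ)^(1-p) * t^2/4) = (m₀:ℝ) * ((m₀:ℝ)^(1-p) * t^2/4) := by
      rw [Finset.sum_const, Nat.card_Icc, nsmul_eq_mul]
      simp
    have hchain : (m₀:ℝ) * ((m₀:ℝ)^(1-p) * t^2/4) ≤
        ∑ m ∈ Icc 1 N, (m:ℝ)^(-1-p) * ‖1 - z^m‖^2 := by
      rw [← hcard]
      exact le_trans (Finset.sum_le_sum hstep2)
        (Finset.sum_le_sum_of_subset_of_nonneg hsub (fun m hm _ => hterm m hm))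
    -- m₀ * m₀^(1-p) = m₀^(2-p) ≥ t^(p-2)
    have hm2p : (m₀:ℝ) * (m₀:ℝ)^(1-p) = (m₀:ℝ)^(2-p) := by
      nth_rewrite 1 [← Real.rpow_one (m₀:ℝ)]
      rw [← Real.rpow_add hm₀pos]
      congr 1; ring
    have hinv : (t:ℝ)⁻¹ ≤ (m₀:ℝ) := by
      rw [inv_le_iff_one_le_mul₀ htpos]
      linarith [hm₀t]
    have htp2 : t^(p-2) ≤ (m₀:ℝ)^(2-p) := by
      have h1 : ((t:ℝ)⁻¹)^(2-p) ≤ (m₀:ℝ)^(2-p) :=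
        Real.rpow_le_rpow (by positivity) hinv (by linarith)
      have h2 : ((t:ℝ)⁻¹)^(2-p) = t^(p-2) := by
        rw [Real.inv_rpow ht0, ← Real.rpow_neg ht0]
        ring_nf
      rw [← h2]; exact h1
    have htt : t^(p-2) * t^2 = t^p := by
      rw [← Real.rpow_natCast t 2, ← Real.rpow_add htpos]; norm_num
    have hfin : t^p ≤ 4 * ((m₀:ℝ) * ((m₀:ℝ)^(1-p) * t^2/4)) := by
      calc t^p = t^(p-2) * t^2 := htt.symm
        _ ≤ (m₀:ℝ)^(2-p) * t^2 := mul_le_mul_of_nonneg_right htp2 (sq_nonneg t)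
        _ = 4 * ((m₀:ℝ) * ((m₀:ℝ)^(1-p) * t^2/4)) := by rw [← hm2p]; ring
    calc ‖1 - z‖ ^ p = t^p := rfl
      _ ≤ 4 * ((m₀:ℝ) * ((m₀:ℝ)^(1-p) * t^2/4)) := hfin
      _ ≤ 4 * ∑ m ∈ Icc 1 N, (m:ℝ)^(-1-p) * ‖1 - z^m‖^2 := by linarith [hchain]

lemma abs_one_sub_sq' (w : ℂ) (hw : ‖w‖ = 1) :
    ‖1 - w‖ ^ 2 = 2 - 2 * w.re := by
  have h1 : Complex.normSq w = 1 := by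
    rw [← Complex.sq_norm, hw]; norm_num
  rw [Complex.sq_norm]
  simp only [Complex.normSq_apply, Complex.sub_re, Complex.sub_im, Complex.one_re,
    Complex.one_im] at h1 ⊢
  nlinarith [h1]

variable {G : Type} [AddCommGroup G] [Fintype G] {H : Type} [NormedAddCommGroup H]
  [InnerProductSpace ℂ H]

lemma conj_addChar (χ : AddChar G ℂ) (w : G) : conj (χ w) = χ (-w) := by
  have h1 : χ w * χ (-w) = 1 := by
    rw [← AddChar.map_add_eq_mul]; simp
  have h2 : conj (χ w) * χ w = 1 := by
    have := Complex.normSq_eq_conj_mul_self (z := χ w)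
    rw [← this, Complex.normSq_eq_norm_sq, AddChar.norm_apply]
    norm_num
  calc conj (χ w) = conj (χ w) * (χ w * χ (-w)) := by rw [h1, mul_one]
    _ = (conj (χ w) * χ w) * χ (-w) := by ring
    _ = χ (-w) := by rw [h2, one_mul]

lemma rep_complex (f : G → H) (v : G) :
    ∑ χ : AddChar G ℂ, ((‖∑ w, χ w • f w‖^2 : ℝ) : ℂ) * χ v
      = (Fintype.card G : ℂ) * ∑ w, (inner ℂ (f w) (f (w - v)) : ℂ) := by
  classical
  have hnorm : ∀ χ : AddChar G ℂ, ((‖∑ w, χ w • f w‖^2 : ℝ) : ℂ)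
      = ∑ w, ∑ w', conj (χ w) * (χ w' * (inner ℂ (f w) (f w') : ℂ)) := by
    intro χ
    have h0 : ((‖∑ w, χ w • f w‖^2 : ℝ) : ℂ)
        = (inner ℂ (∑ w, χ w • f w) (∑ w', χ w' • f w') : ℂ) := by
      rw [inner_self_eq_norm_sq_to_K]; norm_cast
    rw [h0, sum_inner]
    refine Finset.sum_congr rfl fun w _ => ?_
    rw [inner_sum]
    refine Finset.sum_congr rfl fun w' _ => ?_
    rw [inner_smul_left, inner_smul_right]
  have e1 : ∀ χ : AddChar G ℂ, ((‖∑ w, χ w • f w‖^2 : ℝ) : ℂ) * χ v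
      = ∑ w, ∑ w', χ (w' + v - w) * (inner ℂ (f w) (f w') : ℂ) := by
    intro χ
    rw [hnorm χ, Finset.sum_mul]
    refine Finset.sum_congr rfl fun w _ => ?_
    rw [Finset.sum_mul]
    refine Finset.sum_congr rfl fun w' _ => ?_
    have hχ : χ (w' + v - w) = χ (-w) * (χ w' * χ v) := by
      rw [← AddChar.map_add_eq_mul, ← AddChar.map_add_eq_mul]
      congr 1; abel
    rw [hχ, ← conj_addChar]
    ring
  rw [Finset.sum_congr rfl (fun χ _ => e1 χ), Finset.sum_comm]
  rw [Finset.mul_sum]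
  refine Finset.sum_congr rfl fun w _ => ?_
  rw [Finset.sum_comm]
  have e2 : ∀ w' : G, (∑ χ : AddChar G ℂ, χ (w' + v - w) * (inner ℂ (f w) (f w') : ℂ))
      = (if w' = w - v then (Fintype.card G : ℂ) * (inner ℂ (f w) (f w') : ℂ) else 0) := by
    intro w'
    rw [← Finset.sum_mul, AddChar.sum_apply_eq_ite]
    by_cases h : w' + v - w = 0
    · rw [if_pos h, if_pos (by rw [← sub_eq_zero]; rw [← h]; abel)]
    · rw [if_neg h, if_neg (by intro hc; apply h; rw [hc]; abel), zero_mul]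
  rw [Finset.sum_congr rfl (fun w' _ => e2 w'), Finset.sum_ite_eq' univ (w - v)]
  rw [if_pos (mem_univ _)]

lemma re_inner_sq (x : H) : (inner ℂ x x : ℂ).re = ‖x‖^2 := by
  rw [inner_self_eq_norm_sq_to_K]
  norm_cast

lemma rep_real (f : G → H) (v : G) :
    ∑ χ : AddChar G ℂ, ‖∑ w, χ w • f w‖^2 * ‖1 - χ v‖^2
      = (Fintype.card G : ℝ) * ∑ w, ‖f w - f (w - v)‖^2 := by
  classical
  set n : ℕ := Fintype.card G with hn
  -- real part of the complex identity, for arbitrary shift v'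
  have hre : ∀ v' : G, ∑ χ : AddChar G ℂ, ‖∑ w, χ w • f w‖^2 * (χ v').re
      = (n:ℝ) * ∑ w, (inner ℂ (f w) (f (w - v')) : ℂ).re := by
    intro v'
    have h := congrArg Complex.re (rep_complex f v')
    rw [Complex.re_sum] at h
    have h1 : ∀ χ : AddChar G ℂ, (((‖∑ w, χ w • f w‖^2 : ℝ) : ℂ) * χ v').re
        = ‖∑ w, χ w • f w‖^2 * (χ v').re := by
      intro χ
      simp [← Complex.ofReal_pow, Complex.mul_re]
    rw [Finset.sum_congr rfl (fun χ _ => h1 χ)] at h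
    rw [h, Complex.mul_re]
    simp [Complex.re_sum]
    exact Or.inl hn.symm
  -- the sum of the b's
  have hb0 : ∑ χ : AddChar G ℂ, ‖∑ w, χ w • f w‖^2 = (n:ℝ) * ∑ w, ‖f w‖^2 := by
    have h := hre 0
    simp only [AddChar.map_zero_eq_one, Complex.one_re, mul_one, sub_zero] at h
    rw [h]
    congr 1
    exact Finset.sum_congr rfl fun w _ => re_inner_sq (f w)
  -- |1 - χ v|² = 2 - 2 re χ v
  have habs : ∀ χ : AddChar G ℂ, ‖1 - χ v‖^2 = 2 - 2*(χ v).re := by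
    intro χ
    exact abs_one_sub_sq' _ (by rw [AddChar.norm_apply])
  have hexp : ∀ χ : AddChar G ℂ, ‖∑ w, χ w • f w‖^2 * ‖1 - χ v‖^2
      = 2 * ‖∑ w, χ w • f w‖^2 - 2 * (‖∑ w, χ w • f w‖^2 * (χ v).re) := by
    intro χ; rw [habs χ]; ring
  rw [Finset.sum_congr rfl (fun χ _ => hexp χ), Finset.sum_sub_distrib, ← Finset.mul_sum,
    ← Finset.mul_sum, hb0, hre v]
  -- RHS expansion
  have hns : ∀ w, ‖f w - f (w - v)‖^2
      = ‖f w‖^2 - 2 * (inner ℂ (f w) (f (w - v)) : ℂ).re + ‖f (w - v)‖^2 := by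
    intro w
    have := @norm_sub_sq ℂ H _ _ _ (f w) (f (w - v))
    simpa using this
  have hshift : ∑ w, ‖f (w - v)‖^2 = ∑ w, ‖f w‖^2 :=
    Equiv.sum_comp (Equiv.subRight v) (fun w => ‖f w‖^2)
  rw [Finset.sum_congr rfl (fun w (_ : w ∈ univ) => hns w)]
  rw [Finset.sum_add_distrib, Finset.sum_sub_distrib, hshift, ← Finset.mul_sum]
  ring

/-- There is a universal `C > 0` such that: if `G` is a finite Abelian
group with an invariant metric `ρ`, `1 < p < 2`, and `(G, √ρ)` embeds in a complex inner
product space with distortion `D ≥ 1` (normalized as below), then there are nonnegative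
weights `a_χ` on the characters with
`ρ(x,y) ≤ 4·D²·Σ_χ a_χ·|χ(x) - χ(y)|^p ≤ (C·D⁴/(p-1))·ρ(x,y)`, so that `(G, ρ^{1/p})`
embeds in a weighted ℓ_p space over the characters with distortion `O(D^{4/p}/(p-1))`. -/
theorem abelian_negative_type_embeds_in_Lp :
    ∃ C : ℝ, 0 < C ∧
      ∀ (G : Type) [AddCommGroup G] [Fintype G] (ρ : G → G → ℝ),
        (∀ x y, ρ x y = ρ y x) →
        (∀ x y z, ρ x z ≤ ρ x y + ρ y z) →
        (∀ x y, ρ x y = 0 ↔ x = y) →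
        (∀ x y z : G, ρ (z + x) (z + y) = ρ x y) →
        ∀ p : ℝ, 1 < p → p < 2 →
        ∀ D : ℝ, 1 ≤ D →
        ∀ (H : Type) [NormedAddCommGroup H] [InnerProductSpace ℂ H] (f : G → H),
        (∀ x y : G,
          Real.sqrt (ρ x y) ≤ ‖f x - f y‖ ∧ ‖f x - f y‖ ≤ D * Real.sqrt (ρ x y)) →
        ∃ a : AddChar G ℂ → ℝ, (∀ χ, 0 ≤ a χ) ∧
          ∀ x y : G,
            ρ x y ≤ 4 * D ^ 2 * (∑ χ : AddChar G ℂ, a χ * ‖χ x - χ y‖ ^ p) ∧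
              4 * D ^ 2 * (∑ χ : AddChar G ℂ, a χ * ‖χ x - χ y‖ ^ p) ≤
                C * D ^ 4 / (p - 1) * ρ x y := by
  refine ⟨16, by norm_num, ?_⟩
  intro G _ _ ρ hsymm htri hzero hinv p hp1 hp2 D hD H _ _ f hf
  classical
  set n : ℕ := Fintype.card G with hn
  have hn0 : 0 < n := Fintype.card_pos
  have hnr : (0:ℝ) < (n:ℝ) := by exact_mod_cast hn0
  have hD0 : (0:ℝ) < D := lt_of_lt_of_le one_pos hD
  have hp0 : (0:ℝ) < p - 1 := by linarith
  have hρ0 : ∀ x : G, ρ x x = 0 := fun x => (hzero x x).mpr rfl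
  have hρnn : ∀ x y : G, 0 ≤ ρ x y := by
    intro x y
    have h1 := htri x y x
    have h2 := hsymm y x
    have h3 := hρ0 x
    linarith
  have hshift : ∀ x y : G, ρ x y = ρ (x - y) 0 := by
    intro x y
    have h := hinv (x - y) 0 y
    have h2 : y + (x - y) = x := by abel
    rw [h2, add_zero] at h
    exact h
  have hmul : ∀ (m : ℕ) (u : G), ρ (m • u) 0 ≤ (m:ℝ) * ρ u 0 := by
    intro m u
    induction m with
    | zero => simp [hρ0]
    | succ m ih =>
      have h1 : ρ ((m+1) • u) 0 ≤ ρ ((m+1) • u) (m • u) + ρ (m • u) 0 := htri _ _ _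
      have h2 : ρ ((m+1) • u) (m • u) = ρ u 0 := by
        have h := hinv u 0 (m • u)
        rw [add_zero] at h
        rw [succ_nsmul]
        exact h
      push_cast
      linarith
  have hf2 : ∀ x y : G, ρ x y ≤ ‖f x - f y‖^2 ∧ ‖f x - f y‖^2 ≤ D^2 * ρ x y := by
    intro x y
    obtain ⟨h1, h2⟩ := hf x y
    have h0 : 0 ≤ ρ x y := hρnn x y
    have hsq := Real.sq_sqrt h0
    constructor
    · nlinarith [Real.sqrt_nonneg (ρ x y), norm_nonneg (f x - f y)]
    · nlinarith [Real.sqrt_nonneg (ρ x y), norm_nonneg (f x - f y)]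
  set Φ : G → ℝ := fun v => ∑ w, ‖f w - f (w - v)‖^2 with hΦdef
  have hΦ1 : ∀ v : G, (n:ℝ) * ρ v 0 ≤ Φ v := by
    intro v
    have hterm : ∀ w : G, ρ v 0 ≤ ‖f w - f (w - v)‖^2 := by
      intro w
      have h := (hf2 w (w - v)).1
      have he : ρ w (w - v) = ρ v 0 := by
        rw [hshift w (w - v)]
        congr 1
        abel
      rw [he] at h
      exact h
    calc (n:ℝ) * ρ v 0 = ∑ _w : G, ρ v 0 := by
          rw [Finset.sum_const, Finset.card_univ, nsmul_eq_mul, hn]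
      _ ≤ Φ v := Finset.sum_le_sum (fun w _ => hterm w)
  have hΦ2 : ∀ v : G, Φ v ≤ (n:ℝ) * (D^2 * ρ v 0) := by
    intro v
    have hterm : ∀ w : G, ‖f w - f (w - v)‖^2 ≤ D^2 * ρ v 0 := by
      intro w
      have h := (hf2 w (w - v)).2
      have he : ρ w (w - v) = ρ v 0 := by
        rw [hshift w (w - v)]
        congr 1
        abel
      rw [he] at h
      exact h
    calc Φ v ≤ ∑ _w : G, D^2 * ρ v 0 := Finset.sum_le_sum (fun w _ => hterm w)
      _ = (n:ℝ) * (D^2 * ρ v 0) := by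
          rw [Finset.sum_const, Finset.card_univ, nsmul_eq_mul, hn]
  set b : AddChar G ℂ → ℝ := fun χ => ‖∑ w, χ w • f w‖^2 with hbdef
  have hbnn : ∀ χ : AddChar G ℂ, 0 ≤ b χ := fun χ => sq_nonneg _
  have hrep : ∀ v : G, ∑ χ : AddChar G ℂ, b χ * ‖1 - χ v‖^2 = (n:ℝ) * Φ v :=
    fun v => rep_real f v
  refine ⟨fun χ => b χ / (2 * D^2 * (n:ℝ)^2),
    fun χ => div_nonneg (hbnn χ) (by positivity), ?_⟩
  intro x y
  set u : G := x - y with hu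
  have hρu : ρ u 0 = ρ x y := (hshift x y).symm
  have hρxy : 0 ≤ ρ x y := hρnn x y
  have habsχ : ∀ χ : AddChar G ℂ, ‖χ x - χ y‖ = ‖1 - χ u‖ := by
    intro χ
    have h1 : χ x = χ y * χ u := by
      rw [← AddChar.map_add_eq_mul]
      congr 1
      rw [hu]
      abel
    have h2 : χ x - χ y = χ y * (χ u - 1) := by rw [h1]; ring
    rw [h2, norm_mul,
      show ‖χ y‖ = 1 from by rw [AddChar.norm_apply],
      one_mul]
    exact norm_sub_rev _ _
  set S : ℝ := ∑ χ : AddChar G ℂ, b χ * ‖1 - χ u‖ ^ p with hS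
  have hmid : 4 * D^2 * (∑ χ : AddChar G ℂ,
      (b χ / (2 * D^2 * (n:ℝ)^2)) * ‖χ x - χ y‖ ^ p) = (2 / (n:ℝ)^2) * S := by
    rw [hS, Finset.mul_sum, Finset.mul_sum]
    refine Finset.sum_congr rfl fun χ _ => ?_
    rw [habsχ χ]
    field_simp
    ring
  -- lower bound
  have hsq_le : ∀ t : ℝ, 0 ≤ t → t ≤ 2 → t^2 ≤ 2 * t^p := by
    intro t ht0 ht2
    rcases eq_or_lt_of_le ht0 with h | h
    · rw [← h, Real.zero_rpow (by linarith : p ≠ 0)]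
      norm_num
    · have e1 : t^(2:ℝ) = t^p * t^(2-p) := by
        rw [← Real.rpow_add h]
        ring_nf
      have e2 : t^(2-p) ≤ 2 := by
        calc t^(2-p) ≤ 2^(2-p) := Real.rpow_le_rpow ht0 ht2 (by linarith)
          _ ≤ 2^(1:ℝ) := Real.rpow_le_rpow_of_exponent_le one_le_two (by linarith)
          _ = 2 := Real.rpow_one 2
      have e3 : 0 ≤ t^p := Real.rpow_nonneg ht0 _
      calc t^2 = t^(2:ℝ) := by rw [← Real.rpow_natCast t 2]; norm_num
        _ = t^p * t^(2-p) := e1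
        _ ≤ t^p * 2 := mul_le_mul_of_nonneg_left e2 e3
        _ = 2 * t^p := by ring
  have habs2 : ∀ (χ : AddChar G ℂ) (v : G), ‖1 - χ v‖ ≤ 2 := by
    intro χ v
    calc ‖1 - χ v‖ ≤ ‖(1:ℂ)‖ + ‖χ v‖ := by
          simpa using norm_sub_le (1:ℂ) (χ v)
      _ = 2 := by
          rw [show ‖χ v‖ = 1 from by
            rw [AddChar.norm_apply], norm_one]
          norm_num
  have hlower : ρ x y ≤ (2/(n:ℝ)^2) * S := by
    have h1 : (n:ℝ) * Φ u ≤ 2 * S := by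
      rw [← hrep u, hS, Finset.mul_sum]
      apply Finset.sum_le_sum
      intro χ _
      have hh := hsq_le (‖1 - χ u‖) (norm_nonneg _) (habs2 χ u)
      calc b χ * ‖1 - χ u‖^2 ≤ b χ * (2 * ‖1 - χ u‖^p) :=
            mul_le_mul_of_nonneg_left hh (hbnn χ)
        _ = 2 * (b χ * ‖1 - χ u‖^p) := by ring
    have h2 : (n:ℝ) * ((n:ℝ) * ρ x y) ≤ (n:ℝ) * Φ u := by
      rw [← hρu]
      exact mul_le_mul_of_nonneg_left (hΦ1 u) (Nat.cast_nonneg n)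
    have hn2 : (0:ℝ) < (n:ℝ)^2 := by positivity
    rw [div_mul_eq_mul_div, le_div_iff₀ hn2]
    nlinarith [h1, h2]
  -- upper bound
  have hchar : ∀ χ : AddChar G ℂ, ‖1 - χ u‖^p
      ≤ 4 * ∑ m ∈ Finset.Icc 1 n, (m:ℝ)^(-1-p) * ‖1 - χ (m • u)‖^2 := by
    intro χ
    have hz : ‖χ u‖ = 1 := by rw [AddChar.norm_apply]
    have hnu : n • u = 0 := by rw [hn]; exact card_nsmul_eq_zero
    have hzN : (χ u)^n = 1 := by
      rw [← AddChar.map_nsmul_eq_pow, hnu, AddChar.map_zero_eq_one]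
    have h := key_char p hp1 hp2 n hn0 (χ u) hz hzN
    simpa only [AddChar.map_nsmul_eq_pow] using h
  have hΦm : ∀ m : ℕ, Φ (m • u) ≤ (n:ℝ) * (D^2 * ((m:ℝ) * ρ x y)) := by
    intro m
    have h1 := hΦ2 (m • u)
    have h2 := hmul m u
    rw [hρu] at h2
    calc Φ (m • u) ≤ (n:ℝ) * (D^2 * ρ (m • u) 0) := h1
      _ ≤ (n:ℝ) * (D^2 * ((m:ℝ) * ρ x y)) := by
          apply mul_le_mul_of_nonneg_left _ (Nat.cast_nonneg n)
          apply mul_le_mul_of_nonneg_left h2 (by positivity)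
  have hupper_S : S ≤ 4 * ((n:ℝ)^2 * (D^2 * ρ x y)) * (2/(p-1)) := by
    have hstep1 : S ≤ ∑ χ : AddChar G ℂ,
        b χ * (4 * ∑ m ∈ Finset.Icc 1 n, (m:ℝ)^(-1-p) * ‖1 - χ (m • u)‖^2) := by
      rw [hS]
      apply Finset.sum_le_sum
      intro χ _
      exact mul_le_mul_of_nonneg_left (hchar χ) (hbnn χ)
    have hswap : ∑ χ : AddChar G ℂ,
        b χ * (4 * ∑ m ∈ Finset.Icc 1 n, (m:ℝ)^(-1-p) * ‖1 - χ (m • u)‖^2)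
        = 4 * ∑ m ∈ Finset.Icc 1 n, (m:ℝ)^(-1-p) * ((n:ℝ) * Φ (m • u)) := by
      calc ∑ χ : AddChar G ℂ,
          b χ * (4 * ∑ m ∈ Finset.Icc 1 n, (m:ℝ)^(-1-p) * ‖1 - χ (m • u)‖^2)
          = ∑ χ : AddChar G ℂ, ∑ m ∈ Finset.Icc 1 n,
              4 * ((m:ℝ)^(-1-p) * (b χ * ‖1 - χ (m • u)‖^2)) := by
            refine Finset.sum_congr rfl fun χ _ => ?_
            rw [Finset.mul_sum, Finset.mul_sum]
            refine Finset.sum_congr rfl fun m _ => ?_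
            ring
        _ = ∑ m ∈ Finset.Icc 1 n, ∑ χ : AddChar G ℂ,
              4 * ((m:ℝ)^(-1-p) * (b χ * ‖1 - χ (m • u)‖^2)) := Finset.sum_comm
        _ = 4 * ∑ m ∈ Finset.Icc 1 n, (m:ℝ)^(-1-p) * ((n:ℝ) * Φ (m • u)) := by
            rw [Finset.mul_sum]
            refine Finset.sum_congr rfl fun m _ => ?_
            rw [← hrep (m • u), Finset.mul_sum, Finset.mul_sum]
    have hterm_m : ∀ m ∈ Finset.Icc 1 n, (m:ℝ)^(-1-p) * ((n:ℝ) * Φ (m • u))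
        ≤ ((n:ℝ)^2 * (D^2 * ρ x y)) * (m:ℝ)^(-p) := by
      intro m hm
      have hm1 : 1 ≤ m := (Finset.mem_Icc.mp hm).1
      have hmpos : (0:ℝ) < (m:ℝ) := by exact_mod_cast hm1
      have hmr : (m:ℝ)^(-1-p) * (m:ℝ) = (m:ℝ)^(-p) := by
        nth_rewrite 2 [← Real.rpow_one (m:ℝ)]
        rw [← Real.rpow_add hmpos]
        congr 1
        ring
      have h3 : (0:ℝ) ≤ (m:ℝ)^(-1-p) := Real.rpow_nonneg (le_of_lt hmpos) _
      calc (m:ℝ)^(-1-p) * ((n:ℝ) * Φ (m • u))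
          ≤ (m:ℝ)^(-1-p) * ((n:ℝ) * ((n:ℝ) * (D^2 * ((m:ℝ) * ρ x y)))) := by
            apply mul_le_mul_of_nonneg_left _ h3
            exact mul_le_mul_of_nonneg_left (hΦm m) (Nat.cast_nonneg n)
        _ = ((n:ℝ)^2 * (D^2 * ρ x y)) * ((m:ℝ)^(-1-p) * (m:ℝ)) := by ring
        _ = ((n:ℝ)^2 * (D^2 * ρ x y)) * (m:ℝ)^(-p) := by rw [hmr]
    have hzeta := aux_zeta p hp1 hp2 n
    have hc0 : (0:ℝ) ≤ (n:ℝ)^2 * (D^2 * ρ x y) := by positivity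
    calc S ≤ 4 * ∑ m ∈ Finset.Icc 1 n, (m:ℝ)^(-1-p) * ((n:ℝ) * Φ (m • u)) := by
          rw [← hswap]; exact hstep1
      _ ≤ 4 * ∑ m ∈ Finset.Icc 1 n, ((n:ℝ)^2 * (D^2 * ρ x y)) * (m:ℝ)^(-p) := by
          have := Finset.sum_le_sum hterm_m
          linarith
      _ = 4 * (((n:ℝ)^2 * (D^2 * ρ x y)) * ∑ m ∈ Finset.Icc 1 n, (m:ℝ)^(-p)) := by
          rw [← Finset.mul_sum]
      _ ≤ 4 * (((n:ℝ)^2 * (D^2 * ρ x y)) * (2/(p-1))) := by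
          have := mul_le_mul_of_nonneg_left hzeta hc0
          linarith
      _ = 4 * ((n:ℝ)^2 * (D^2 * ρ x y)) * (2/(p-1)) := by ring
  constructor
  · rw [hmid]
    exact hlower
  · rw [hmid]
    calc (2/(n:ℝ)^2) * S ≤ (2/(n:ℝ)^2) * (4 * ((n:ℝ)^2 * (D^2 * ρ x y)) * (2/(p-1))) := by
          apply mul_le_mul_of_nonneg_left hupper_S (by positivity)
      _ = 16 * D^2 / (p-1) * ρ x y := by
          field_simp
          ring
      _ ≤ 16 * D^4 / (p-1) * ρ x y := by
          have h1 : 1 ≤ D^2 := by nlinarith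
          have h2 : D^2 ≤ D^4 := by
            calc D^2 = D^2 * 1 := by ring
              _ ≤ D^2 * D^2 := mul_le_mul_of_nonneg_left h1 (sq_nonneg D)
              _ = D^4 := by ring
          have h3 : 16 * D^2/(p-1) ≤ 16 * D^4/(p-1) := by
            apply (div_le_div_iff_of_pos_right hp0).mpr
            linarith
          exact mul_le_mul_of_nonneg_right h3 hρxy
end

section
/- There exists a universal constant c > 0 such that for every complex number z with |z| = 1 and every integer k ≥ 1, if 2^{−k} < |z − 1| ≤ 2^{−k+1} then |1 − z^{2^{k−1}}| ≥ c·2^k·|z − 1|. -/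
lemma unimod_abs_add_sq (w : ℂ) (hw : ‖w‖ = 1) :
    (‖1 + w‖) ^ 2 + (‖1 - w‖) ^ 2 = 4 := by
  have hn : Complex.normSq w = 1 := by
    rw [← Complex.sq_norm, hw]; norm_num
  rw [Complex.sq_norm, Complex.sq_norm]
  simp only [Complex.normSq_apply, Complex.add_re, Complex.add_im, Complex.sub_re,
    Complex.sub_im, Complex.one_re, Complex.one_im, Complex.normSq_apply] at *
  nlinarith [hn]

lemma unimod_abs_add_ge (w : ℂ) (hw : ‖w‖ = 1) :
    2 - (‖1 - w‖) ^ 2 / 2 ≤ ‖1 + w‖ := by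
  have h := unimod_abs_add_sq w hw
  have ha : 0 ≤ ‖1 + w‖ := norm_nonneg _
  have hd : 0 ≤ ‖1 - w‖ := norm_nonneg _
  set a := ‖1 + w‖
  set d := ‖1 - w‖
  nlinarith [sq_nonneg (a - (2 - d ^ 2 / 2)), sq_nonneg (a + (2 - d ^ 2 / 2)), sq_nonneg d, sq_nonneg (d * d)]

lemma abs_one_sub_pow_le (z : ℂ) (hz : ‖z‖ = 1) :
    ∀ j : ℕ, ‖1 - z ^ 2 ^ j‖ ≤ 2 ^ j * ‖z - 1‖ := by
  intro j
  induction j with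
  | zero =>
    simp [norm_sub_rev 1 z]
  | succ j ih =>
    have hw : ‖z ^ 2 ^ j‖ = 1 := by
      rw [norm_pow, hz, one_pow]
    have hfac : (1 : ℂ) - z ^ 2 ^ (j + 1) = (1 - z ^ 2 ^ j) * (1 + z ^ 2 ^ j) := by
      rw [pow_succ, pow_mul]; ring
    rw [hfac, norm_mul]
    have h2 : ‖1 + z ^ 2 ^ j‖ ≤ 2 := by
      calc ‖1 + z ^ 2 ^ j‖ ≤ ‖(1:ℂ)‖ + ‖z ^ 2 ^ j‖ :=
            norm_add_le _ _
        _ = 2 := by rw [hw]; norm_num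
    calc ‖1 - z ^ 2 ^ j‖ * ‖1 + z ^ 2 ^ j‖
        ≤ (2 ^ j * ‖z - 1‖) * 2 :=
          mul_le_mul ih h2 (norm_nonneg _)
            (by positivity)
      _ = 2 ^ (j + 1) * ‖z - 1‖ := by ring

lemma unimod_main (m : ℕ) (z : ℂ) (hz : ‖z‖ = 1)
    (hs : ‖z - 1‖ ≤ 1 / 2 ^ m) :
    ∀ j : ℕ, j ≤ m →
      (1 - (4 : ℝ) ^ j / (3 * 4 ^ (m + 1))) * 2 ^ j * ‖z - 1‖
        ≤ ‖1 - z ^ 2 ^ j‖ := by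
  intro j
  induction j with
  | zero =>
    intro _
    have h1 : ‖1 - z ^ 2 ^ 0‖ = ‖z - 1‖ := by
      simp [norm_sub_rev 1 z]
    rw [h1]
    have : (1 - (4 : ℝ) ^ 0 / (3 * 4 ^ (m + 1))) ≤ 1 := by
      have : (0:ℝ) < (4:ℝ) ^ 0 / (3 * 4 ^ (m + 1)) := by positivity
      linarith
    nlinarith [norm_nonneg (z - 1)]
  | succ j ih =>
    intro hj
    have hj' : j ≤ m := Nat.le_of_succ_le hj
    have IH := ih hj'
    set s := ‖z - 1‖ with hsdef
    set d := ‖1 - z ^ 2 ^ j‖ with hddef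
    have hw : ‖z ^ 2 ^ j‖ = 1 := by rw [norm_pow, hz, one_pow]
    have hfac : (1 : ℂ) - z ^ 2 ^ (j + 1) = (1 - z ^ 2 ^ j) * (1 + z ^ 2 ^ j) := by
      rw [pow_succ, pow_mul]; ring
    have habs : ‖1 - z ^ 2 ^ (j + 1)‖ = d * ‖1 + z ^ 2 ^ j‖ := by
      rw [hfac, norm_mul]
    have hplus : 2 - d ^ 2 / 2 ≤ ‖1 + z ^ 2 ^ j‖ :=
      unimod_abs_add_ge (z ^ 2 ^ j) hw
    have hd0 : 0 ≤ d := norm_nonneg _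
    have hs0 : 0 ≤ s := norm_nonneg _
    have hdle : d ≤ 2 ^ j * s := abs_one_sub_pow_le z hz j
    -- set t := 4^j / 4^(m+1)
    set t : ℝ := (4 : ℝ) ^ j / 4 ^ (m + 1) with htdef
    have ht0 : 0 < t := by positivity
    have ht16 : t ≤ 1 / 16 := by
      rw [htdef, div_le_div_iff₀ (by positivity) (by norm_num : (0:ℝ) < 16)]
      have he : (4 : ℝ) ^ j * 16 = 4 ^ (j + 2) := by ring
      rw [he]
      calc (4:ℝ) ^ (j + 2) ≤ 4 ^ (m + 1) := by
            apply pow_le_pow_right₀ (by norm_num) (by omega)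
        _ = 1 * 4 ^ (m + 1) := (one_mul _).symm
    -- d ≤ 2^(j-m), so d^2 ≤ 4 t
    have hdsmall : d ≤ 2 ^ j / 2 ^ m := by
      calc d ≤ 2 ^ j * s := hdle
        _ ≤ 2 ^ j * (1 / 2 ^ m) := by
            apply mul_le_mul_of_nonneg_left hs (by positivity)
        _ = 2 ^ j / 2 ^ m := by ring
    have hd2 : d ^ 2 ≤ 4 * t := by
      have h1 : d ^ 2 ≤ (2 ^ j / 2 ^ m : ℝ) ^ 2 := by
        apply pow_le_pow_left₀ hd0 hdsmall
      have h2 : ((2:ℝ) ^ j / 2 ^ m) ^ 2 = 4 * t := by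
        have e1 : ((2:ℝ) ^ j) ^ 2 = 4 ^ j := by
          rw [← pow_mul, mul_comm, pow_mul]; norm_num
        have e2 : ((2:ℝ) ^ m) ^ 2 = 4 ^ m := by
          rw [← pow_mul, mul_comm, pow_mul]; norm_num
        rw [div_pow, e1, e2, htdef, pow_succ]
        field_simp
      linarith
    -- rewrite coefficients in terms of t
    have hAj : (1 - (4 : ℝ) ^ j / (3 * 4 ^ (m + 1))) = 1 - t / 3 := by
      rw [htdef]; ring
    have hAj1 : (1 - (4 : ℝ) ^ (j + 1) / (3 * 4 ^ (m + 1))) = 1 - 4 * t / 3 := by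
      rw [htdef, pow_succ]; ring
    rw [habs, hAj1]
    rw [hAj] at IH
    have hA0 : 0 ≤ 1 - t / 3 := by linarith
    have hq0 : 0 ≤ 2 - d ^ 2 / 2 := by nlinarith
    calc (1 - 4 * t / 3) * 2 ^ (j + 1) * s
        ≤ ((1 - t / 3) * 2 ^ j * s) * (2 - d ^ 2 / 2) := by
          have key : (1 - 4 * t / 3) * 2 ≤ (1 - t / 3) * (2 - d ^ 2 / 2) := by
            nlinarith [mul_nonneg hA0 (by linarith : (0:ℝ) ≤ 4 * t - d ^ 2)]
          have h2js : (0:ℝ) ≤ 2 ^ j * s := by positivity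
          calc (1 - 4 * t / 3) * 2 ^ (j + 1) * s
              = ((1 - 4 * t / 3) * 2) * (2 ^ j * s) := by ring
            _ ≤ ((1 - t / 3) * (2 - d ^ 2 / 2)) * (2 ^ j * s) := by
                apply mul_le_mul_of_nonneg_right key h2js
            _ = ((1 - t / 3) * 2 ^ j * s) * (2 - d ^ 2 / 2) := by ring
      _ ≤ d * (2 - d ^ 2 / 2) := mul_le_mul_of_nonneg_right IH hq0
      _ ≤ d * ‖1 + z ^ 2 ^ j‖ := mul_le_mul_of_nonneg_left hplus hd0

/-- There is a universal `c > 0` such that for every unimodular complex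
number `z` and every integer `k ≥ 1`, if `2^{-k} < |z - 1| ≤ 2^{-k+1}` then
`|1 - z^{2^{k-1}}| ≥ c·2^k·|z - 1|`. -/
theorem unimodular_power_lower_bound :
    ∃ c : ℝ, 0 < c ∧
      ∀ z : ℂ, ‖z‖ = 1 →
        ∀ k : ℕ, 1 ≤ k →
          (1 : ℝ) / 2 ^ k < ‖z - 1‖ →
          ‖z - 1‖ ≤ (1 : ℝ) / 2 ^ (k - 1) →
          c * 2 ^ k * ‖z - 1‖ ≤ ‖1 - z ^ 2 ^ (k - 1)‖ := by
  refine ⟨1 / 4, by norm_num, ?_⟩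
  intro z hz k hk _ hub
  set m := k - 1 with hm
  have hkm : k = m + 1 := by omega
  have key := unimod_main m z hz hub m le_rfl
  have hc : (1 - (4 : ℝ) ^ m / (3 * 4 ^ (m + 1))) = 11 / 12 := by
    rw [pow_succ]
    have h4 : (0:ℝ) < (4:ℝ) ^ m := by positivity
    field_simp
    ring
  rw [hc] at key
  have hs0 : 0 ≤ ‖z - 1‖ := norm_nonneg _
  have h2k : (2 : ℝ) ^ k = 2 * 2 ^ m := by rw [hkm, pow_succ]; ring
  calc (1 / 4 : ℝ) * 2 ^ k * ‖z - 1‖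
      = (1 / 2) * 2 ^ m * ‖z - 1‖ := by rw [h2k]; ring
    _ ≤ (11 / 12) * 2 ^ m * ‖z - 1‖ := by
        apply mul_le_mul_of_nonneg_right _ hs0
        have : (0:ℝ) ≤ 2 ^ m := by positivity
        nlinarith
    _ ≤ ‖1 - z ^ 2 ^ m‖ := key
end

section
/- There is a universal constant C > 0 with the following property. Let d ≥ 1 and let ρ be an invariant metric on the group G = (ZMod 2)^d (i.e. ρ(z + x, z + y) = ρ(x, y) for all x, y, z ∈ G). Suppose D ≥ 1 and there exist a complex inner product space H and f : G → H with √(ρ(x, y)) ≤ ‖f(x) − f(y)‖ ≤ D·√(ρ(x, y)) for all x, y. Then there exist nonnegative reals (a_S), indexed by the subsets S of {1, …, d}, such that, writing χ_S(x) = (−1)^{Σ_{i ∈ S} x_i}, for all x, y ∈ G: ρ(x, y) ≤ 2·D²·Σ_S a_S·|χ_S(x) − χ_S(y)| ≤ C·D⁴·ρ(x, y). In particular (G, ρ) embeds into ℓ₁ with distortion at most C·D⁴. -/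
/-- The Walsh character of the discrete cube `(ZMod 2)^d` associated to a subset
`S ⊆ {1, …, d}`: `χ_S(x) = (-1)^{Σ_{i ∈ S} x_i}`. -/
def walshChar {d : ℕ} (S : Finset (Fin d)) (x : Fin d → ZMod 2) : ℝ :=
  (-1 : ℝ) ^ (∑ i ∈ S, (x i).val)

lemma walsh_mul {d : ℕ} (S : Finset (Fin d)) (x y : Fin d → ZMod 2) :
    walshChar S x * walshChar S y = walshChar S (x + y) := by
  unfold walshChar
  rw [← pow_add, neg_one_pow_eq_pow_mod_two, neg_one_pow_eq_pow_mod_two (∑ i ∈ S, ((x + y) i).val)]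
  congr 1
  rw [← Finset.sum_add_distrib, Finset.sum_nat_mod]
  conv_rhs => rw [Finset.sum_nat_mod]
  congr 1
  apply Finset.sum_congr rfl
  intro i _
  have h : ∀ a b : ZMod 2, (a.val + b.val) % 2 = (a + b).val % 2 := by decide
  exact h (x i) (y i)

lemma walsh_zero {d : ℕ} (S : Finset (Fin d)) : walshChar S (0 : Fin d → ZMod 2) = 1 := by
  unfold walshChar
  simp [ZMod.val_zero]

lemma walsh_pm {d : ℕ} (S : Finset (Fin d)) (x : Fin d → ZMod 2) :
    walshChar S x = 1 ∨ walshChar S x = -1 := by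
  unfold walshChar
  rcases Nat.even_or_odd (∑ i ∈ S, (x i).val) with h | h
  · left; exact h.neg_one_pow
  · right; exact h.neg_one_pow

lemma walsh_abs {d : ℕ} (S : Finset (Fin d)) (x y : Fin d → ZMod 2) :
    |walshChar S x - walshChar S y| = 1 - walshChar S x * walshChar S y := by
  rcases walsh_pm S x with h1 | h1 <;> rcases walsh_pm S y with h2 | h2 <;>
    rw [h1, h2] <;> norm_num

lemma walsh_sum {d : ℕ} (t : Fin d → ZMod 2) :
    ∑ S : Finset (Fin d), walshChar S t = if t = 0 then (2:ℝ)^d else 0 := by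
  have h1 : ∀ S : Finset (Fin d), walshChar S t = ∏ i ∈ S, (-1:ℝ) ^ (t i).val := by
    intro S; rw [Finset.prod_pow_eq_pow_sum]; rfl
  have h2 : ∑ S : Finset (Fin d), walshChar S t
      = ∏ i : Fin d, ((-1:ℝ) ^ (t i).val + 1) := by
    rw [Finset.prod_add]
    simp only [Finset.prod_const_one, mul_one]
    rw [Finset.powerset_univ]
    exact Finset.sum_congr rfl fun S _ => h1 S
  rw [h2]
  by_cases ht : t = 0
  · subst ht
    simp [ZMod.val_zero, Finset.card_univ]
    norm_num
  · obtain ⟨i, hi⟩ := Function.ne_iff.mp ht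
    rw [if_neg ht]
    apply Finset.prod_eq_zero (Finset.mem_univ i)
    have : t i = 1 := by
      have h : ∀ a : ZMod 2, a ≠ 0 → a = 1 := by decide
      exact h _ hi
    rw [this, show ZMod.val (1 : ZMod 2) = 1 from rfl]
    norm_num

/-- There is a universal `C > 0` such that: for every invariant metric
`ρ` on the discrete cube `G = (ZMod 2)^d`, if `(G, √ρ)` embeds in a complex inner product
space with distortion `D ≥ 1` (normalized as below), then there are nonnegative weights
`a_S` on subsets `S ⊆ {1, …, d}` with
`ρ(x,y) ≤ 2·D²·Σ_S a_S·|χ_S(x) - χ_S(y)| ≤ C·D⁴·ρ(x,y)`; in particular `(G, ρ)` embeds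
into `ℓ₁` with distortion at most `C·D⁴`. -/
theorem cube_negative_type_embeds_in_L1 :
    ∃ C : ℝ, 0 < C ∧
      ∀ (d : ℕ), 1 ≤ d →
        ∀ ρ : (Fin d → ZMod 2) → (Fin d → ZMod 2) → ℝ,
        (∀ x y, ρ x y = ρ y x) →
        (∀ x y z, ρ x z ≤ ρ x y + ρ y z) →
        (∀ x y, ρ x y = 0 ↔ x = y) →
        (∀ x y z, ρ (z + x) (z + y) = ρ x y) →
        ∀ D : ℝ, 1 ≤ D →
        ∀ (H : Type) [NormedAddCommGroup H] [InnerProductSpace ℂ H]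
          (f : (Fin d → ZMod 2) → H),
        (∀ x y, Real.sqrt (ρ x y) ≤ ‖f x - f y‖ ∧ ‖f x - f y‖ ≤ D * Real.sqrt (ρ x y)) →
        ∃ a : Finset (Fin d) → ℝ, (∀ S, 0 ≤ a S) ∧
          ∀ x y,
            ρ x y ≤ 2 * D ^ 2 *
                (∑ S : Finset (Fin d), a S * |walshChar S x - walshChar S y|) ∧
              2 * D ^ 2 * (∑ S : Finset (Fin d), a S * |walshChar S x - walshChar S y|) ≤
                C * D ^ 4 * ρ x y := by
  refine ⟨1, one_pos, ?_⟩
  intro d _hd ρ hsymm htri hzero hinv D hD H _ _ f hf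
  have hD0 : (0:ℝ) < D := lt_of_lt_of_le one_pos hD
  have hρ0 : ∀ x y, 0 ≤ ρ x y := by
    intro x y
    have h := htri x x y
    rw [(hzero x x).2 rfl, hsymm x y] at h
    linarith [htri x y x, (hzero x x).2 rfl, hsymm y x]
  have hlow : ∀ x y, ρ x y ≤ ‖f x - f y‖^2 := by
    intro x y
    have h := (hf x y).1
    have h2 := Real.sq_sqrt (hρ0 x y)
    nlinarith [Real.sqrt_nonneg (ρ x y), norm_nonneg (f x - f y)]
  have hup : ∀ x y, ‖f x - f y‖^2 ≤ D^2 * ρ x y := by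
    intro x y
    have h := (hf x y).2
    have h2 := Real.sq_sqrt (hρ0 x y)
    nlinarith [Real.sqrt_nonneg (ρ x y), norm_nonneg (f x - f y)]
  -- helpers on the group
  have h2z : ∀ b : ZMod 2, -b = b := by decide
  have hneg : ∀ a : Fin d → ZMod 2, -a = a := fun a => funext fun i => h2z (a i)
  have hself : ∀ a : Fin d → ZMod 2, a + a = 0 := fun a => by
    nth_rewrite 1 [← hneg a]
    exact neg_add_cancel a
  set g : Finset (Fin d) → H := fun S => ∑ u, ((walshChar S u : ℝ) : ℂ) • f u with hgdef
  set c : (Fin d → ZMod 2) → (Fin d → ZMod 2) → ℝ :=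
    fun u v => RCLike.re (inner ℂ (f u) (f v) : ℂ) with hcdef
  have hg : ∀ S, ‖g S‖^2 = ∑ u, ∑ v, walshChar S u * walshChar S v * c u v := by
    intro S
    have hi : (inner ℂ (g S) (g S) : ℂ)
        = ∑ u, ∑ v, (((walshChar S u * walshChar S v : ℝ)) : ℂ) * inner ℂ (f v) (f u) := by
      simp only [hgdef, sum_inner, inner_sum, inner_smul_left, inner_smul_right,
        Complex.conj_ofReal]
      apply Finset.sum_congr rfl; intro u _
      rw [Finset.mul_sum]
      apply Finset.sum_congr rfl; intro v _
      push_cast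
      ring
    rw [← inner_self_eq_norm_sq (𝕜 := ℂ), hi, map_sum]
    apply Finset.sum_congr rfl; intro u _
    rw [map_sum]
    apply Finset.sum_congr rfl; intro v _
    simp only [RCLike.re_to_complex, Complex.re_ofReal_mul, hcdef]
    rw [show ((inner ℂ (f v) (f u) : ℂ)).re = RCLike.re (inner ℂ (f v) (f u) : ℂ) from rfl,
      inner_re_symm]
    rfl
  refine ⟨fun S => ‖g S‖^2 / (4^d * D^2), fun S => by positivity, ?_⟩
  intro x y
  have hcc : ∀ u, c u u = ‖f u‖^2 := fun u => inner_self_eq_norm_sq (𝕜 := ℂ) (f u)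
  have htwo : (0:ℝ) < 2^d := by positivity
  -- Step 2
  have hkey2 : ∑ S : Finset (Fin d), ‖g S‖^2 * (1 - walshChar S x * walshChar S y)
      = 2^d * ((∑ u, ‖f u‖^2) - ∑ u, c u (u + x + y)) := by
    have e1 : ∀ (S : Finset (Fin d)) u v,
        walshChar S u * walshChar S v * c u v * (1 - walshChar S x * walshChar S y)
        = (walshChar S (u + v) - walshChar S (u + v + x + y)) * c u v := by
      intro S u v
      rw [show u + v + x + y = u + v + (x + y) by abel, ← walsh_mul S (u+v) (x+y),
        ← walsh_mul S x y, ← walsh_mul S u v]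
      ring
    calc ∑ S : Finset (Fin d), ‖g S‖^2 * (1 - walshChar S x * walshChar S y)
        = ∑ S : Finset (Fin d), ∑ u, ∑ v,
            (walshChar S (u + v) - walshChar S (u + v + x + y)) * c u v := by
          apply Finset.sum_congr rfl; intro S _
          rw [hg S, Finset.sum_mul]
          apply Finset.sum_congr rfl; intro u _
          rw [Finset.sum_mul]
          exact Finset.sum_congr rfl fun v _ => e1 S u v
      _ = ∑ u, ∑ v, (∑ S : Finset (Fin d),
            (walshChar S (u + v) - walshChar S (u + v + x + y))) * c u v := by
          rw [Finset.sum_comm]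
          apply Finset.sum_congr rfl; intro u _
          rw [Finset.sum_comm]
          apply Finset.sum_congr rfl; intro v _
          rw [Finset.sum_mul]
      _ = ∑ u, ∑ v, ((if v = u then (2:ℝ)^d else 0) - if v = u + x + y then (2:ℝ)^d else 0)
            * c u v := by
          apply Finset.sum_congr rfl; intro u _
          apply Finset.sum_congr rfl; intro v _
          congr 1
          rw [Finset.sum_sub_distrib, walsh_sum, walsh_sum]
          congr 1
          · congr 1
            simp only [eq_iff_iff]
            rw [add_eq_zero_iff_neg_eq, hneg, eq_comm]
          · congr 1
            simp only [eq_iff_iff]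
            rw [show u + v + x + y = (u + x + y) + v by abel, add_eq_zero_iff_neg_eq,
              hneg, eq_comm]
      _ = ∑ u, ((2:ℝ)^d * c u u - (2:ℝ)^d * c u (u + x + y)) := by
          apply Finset.sum_congr rfl; intro u _
          simp only [sub_mul, ite_mul, zero_mul, Finset.sum_sub_distrib,
            Finset.sum_ite_eq', Finset.mem_univ, if_true]
      _ = 2^d * ((∑ u, ‖f u‖^2) - ∑ u, c u (u + x + y)) := by
          simp only [hcc]
          rw [Finset.sum_sub_distrib, ← Finset.mul_sum, ← Finset.mul_sum, mul_sub]
  -- Step 3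
  have hkey3 : ∑ z, ‖f (z + x) - f (z + y)‖^2
      = 2*(∑ u, ‖f u‖^2) - 2 * ∑ u, c u (u + x + y) := by
    have r1 : ∑ z, ‖f (z + x)‖^2 = ∑ u, ‖f u‖^2 :=
      Fintype.sum_equiv (Equiv.addRight x) _ _ (fun z => rfl)
    have r2 : ∑ z, ‖f (z + y)‖^2 = ∑ u, ‖f u‖^2 :=
      Fintype.sum_equiv (Equiv.addRight y) _ _ (fun z => rfl)
    have r3 : ∑ u, c u (u + x + y) = ∑ z, c (z + x) (z + y) := by
      apply Fintype.sum_equiv (Equiv.addRight x)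
      intro u
      have : u + x + x + y = u + y := by
        rw [add_assoc u x x, hself, add_zero]
      simp only [Equiv.coe_addRight]
      rw [add_assoc u x x, hself, add_zero]
    calc ∑ z, ‖f (z + x) - f (z + y)‖^2
        = ∑ z, (‖f (z + x)‖^2 - 2 * c (z + x) (z + y) + ‖f (z + y)‖^2) := by
          apply Finset.sum_congr rfl; intro z _
          exact norm_sub_sq (𝕜 := ℂ) _ _
      _ = 2*(∑ u, ‖f u‖^2) - 2 * ∑ u, c u (u + x + y) := by
          rw [Finset.sum_add_distrib, Finset.sum_sub_distrib, r1, r2, ← Finset.mul_sum, ← r3]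
          ring
  -- combine into key identity
  have hkey : 2 * D ^ 2 * (∑ S : Finset (Fin d),
        (‖g S‖^2 / (4^d * D^2)) * |walshChar S x - walshChar S y|)
      = (2^d : ℝ)⁻¹ * ∑ z, ‖f (z + x) - f (z + y)‖^2 := by
    have h4 : (4:ℝ)^d = 2^d * 2^d := by
      rw [show (4:ℝ) = 2 * 2 by norm_num, mul_pow]
    have hs : ∑ S : Finset (Fin d), (‖g S‖^2 / (4^d * D^2)) * |walshChar S x - walshChar S y|
        = (∑ S : Finset (Fin d), ‖g S‖^2 * (1 - walshChar S x * walshChar S y)) / (4^d * D^2) := by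
      rw [Finset.sum_div]
      apply Finset.sum_congr rfl; intro S _
      rw [walsh_abs]
      ring
    rw [hs, hkey2, hkey3, h4]
    field_simp
  constructor
  · rw [hkey]
    have hsum : (2:ℝ)^d * ρ x y ≤ ∑ z, ‖f (z + x) - f (z + y)‖^2 := by
      have : ∑ z : Fin d → ZMod 2, ρ x y ≤ ∑ z, ‖f (z + x) - f (z + y)‖^2 := by
        apply Finset.sum_le_sum
        intro z _
        calc ρ x y = ρ (z + x) (z + y) := (hinv x y z).symm
          _ ≤ _ := hlow _ _
      rwa [Finset.sum_const, Finset.card_univ, Fintype.card_fun, ZMod.card,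
        Fintype.card_fin, nsmul_eq_mul, Nat.cast_pow, Nat.cast_ofNat] at this
    calc ρ x y = (2^d)⁻¹ * ((2:ℝ)^d * ρ x y) := by field_simp
      _ ≤ (2^d)⁻¹ * ∑ z, ‖f (z + x) - f (z + y)‖^2 := by
          apply mul_le_mul_of_nonneg_left hsum (by positivity)
  · rw [hkey]
    have hsum : ∑ z, ‖f (z + x) - f (z + y)‖^2 ≤ (2:ℝ)^d * (D^2 * ρ x y) := by
      have : ∑ z, ‖f (z + x) - f (z + y)‖^2 ≤ ∑ z : Fin d → ZMod 2, D^2 * ρ x y := by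
        apply Finset.sum_le_sum
        intro z _
        calc ‖f (z + x) - f (z + y)‖^2 ≤ D^2 * ρ (z + x) (z + y) := hup _ _
          _ = D^2 * ρ x y := by rw [hinv]
      rwa [Finset.sum_const, Finset.card_univ, Fintype.card_fun, ZMod.card,
        Fintype.card_fin, nsmul_eq_mul, Nat.cast_pow, Nat.cast_ofNat] at this
    calc (2^d : ℝ)⁻¹ * ∑ z, ‖f (z + x) - f (z + y)‖^2
        ≤ (2^d : ℝ)⁻¹ * ((2:ℝ)^d * (D^2 * ρ x y)) :=
          mul_le_mul_of_nonneg_left hsum (by positivity)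
      _ = D^2 * ρ x y := by field_simp
      _ ≤ 1 * D^4 * ρ x y := by
          have h1 : (1:ℝ) ≤ D^2 := by nlinarith
          have h2 : D^2 ≤ D^4 := by nlinarith
          have := mul_le_mul_of_nonneg_right h2 (hρ0 x y)
          linarith
end

section
/- Let V be a nonempty finite set, H a complex inner product space, and M : V × V → ℝ a symmetric matrix with nonnegative entries whose rows sum to 1 (Σ_{y ∈ V} M(x, y) = 1 for every x). Suppose 0 ≤ λ < 1 is such that Σ_{x, y ∈ V} M(x, y)·g(x)·g(y) ≤ λ·Σ_{x ∈ V} g(x)² for every function g : V → ℝ with Σ_{x ∈ V} g(x) = 0. Then for every f : V → H: (1/|V|²)·Σ_{x, y ∈ V} ‖f(x) − f(y)‖² ≤ (1/(1 − λ))·(1/|V|)·Σ_{x, y ∈ V} M(x, y)·‖f(x) − f(y)‖². -/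
open Finset RealInnerProductSpace

/-- Key spectral lemma for finite-dimensional real inner product spaces. -/
lemma key_spectral {V : Type*} [Fintype V] {E : Type*} [NormedAddCommGroup E]
    [InnerProductSpace ℝ E] [FiniteDimensional ℝ E]
    (M : V → V → ℝ) (lam : ℝ)
    (hgap : ∀ g : V → ℝ, (∑ x, g x) = 0 →
      (∑ x, ∑ y, M x y * g x * g y) ≤ lam * ∑ x, g x ^ 2)
    (f : V → E) (hf : ∑ x, f x = 0) :
    (∑ x, ∑ y, M x y * ⟪f x, f y⟫) ≤ lam * ∑ x, ‖f x‖ ^ 2 := by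
  set b := stdOrthonormalBasis ℝ E
  set c : Fin (Module.finrank ℝ E) → V → ℝ := fun i x => ⟪b i, f x⟫ with hc
  have hinner : ∀ x y : V, ⟪f x, f y⟫ = ∑ i, c i x * c i y := by
    intro x y
    rw [← b.sum_inner_mul_inner (f x) (f y)]
    exact Finset.sum_congr rfl fun i _ => by rw [hc]; simp [real_inner_comm]
  have hnorm : ∀ x : V, ‖f x‖ ^ 2 = ∑ i, c i x ^ 2 := by
    intro x
    rw [← real_inner_self_eq_norm_sq, hinner]
    exact Finset.sum_congr rfl fun i _ => (sq (c i x)).symm ▸ by ring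
  calc ∑ x, ∑ y, M x y * ⟪f x, f y⟫
      = ∑ x, ∑ y, ∑ i, M x y * c i x * c i y := by
        refine Finset.sum_congr rfl fun x _ => Finset.sum_congr rfl fun y _ => ?_
        rw [hinner x y, Finset.mul_sum]
        exact Finset.sum_congr rfl fun i _ => by ring
    _ = ∑ x, ∑ i, ∑ y, M x y * c i x * c i y :=
        Finset.sum_congr rfl fun x _ => Finset.sum_comm
    _ = ∑ i, ∑ x, ∑ y, M x y * c i x * c i y := Finset.sum_comm
    _ ≤ ∑ i, lam * ∑ x, c i x ^ 2 := by
        refine Finset.sum_le_sum fun i _ => hgap (c i) ?_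
        have : ∑ x, c i x = ⟪b i, ∑ x, f x⟫ := by rw [inner_sum]
        rw [this, hf, inner_zero_right]
    _ = lam * ∑ x, ‖f x‖ ^ 2 := by
        rw [← Finset.mul_sum, Finset.sum_comm]
        congr 1
        exact Finset.sum_congr rfl fun x _ => (hnorm x).symm

/-- (Spectral gap Poincaré inequality for Hilbert-space-valued maps.)
If `M` is a symmetric stochastic matrix on a nonempty finite set `V` whose quadratic form
on mean-zero real functions is bounded by `λ < 1` times the squared `ℓ₂` norm, then for
every map `f` of `V` into a complex inner product space `H`,
`(1/|V|²)·Σ_{x,y} ‖f x - f y‖² ≤ (1/(1-λ))·(1/|V|)·Σ_{x,y} M x y·‖f x - f y‖²`. -/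
theorem poincare_of_spectral_gap {V : Type*} [Fintype V] [Nonempty V]
    {H : Type*} [NormedAddCommGroup H] [InnerProductSpace ℂ H]
    (M : V → V → ℝ)
    (hsymm : ∀ x y, M x y = M y x)
    (hnn : ∀ x y, 0 ≤ M x y)
    (hrow : ∀ x, ∑ y, M x y = 1)
    (lam : ℝ) (hlam0 : 0 ≤ lam) (hlam1 : lam < 1)
    (hgap : ∀ g : V → ℝ, (∑ x, g x) = 0 →
      (∑ x, ∑ y, M x y * g x * g y) ≤ lam * ∑ x, g x ^ 2)
    (f : V → H) :
    (1 / (Fintype.card V : ℝ) ^ 2) * ∑ x, ∑ y, ‖f x - f y‖ ^ 2 ≤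
      (1 / (1 - lam)) *
        ((1 / (Fintype.card V : ℝ)) * ∑ x, ∑ y, M x y * ‖f x - f y‖ ^ 2) := by
  classical
  letI : InnerProductSpace ℝ H := InnerProductSpace.complexToReal
  set n : ℝ := (Fintype.card V : ℝ) with hn
  have hnpos : (0 : ℝ) < n := by
    rw [hn]; exact Nat.cast_pos.mpr Fintype.card_pos
  -- center f
  set m : H := n⁻¹ • ∑ x, f x with hm
  set g : V → H := fun x => f x - m with hgdef
  have hg0 : ∑ x, g x = 0 := by
    simp only [hgdef, Finset.sum_sub_distrib, Finset.sum_const, hm]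
    rw [← Nat.cast_smul_eq_nsmul ℝ, smul_smul, Finset.card_univ, ← hn,
      mul_inv_cancel₀ (ne_of_gt hnpos), one_smul, sub_self]
  have hfg : ∀ x y, f x - f y = g x - g y := by
    intro x y; simp [hgdef]
  -- the span of the range of g is finite dimensional
  set E := Submodule.span ℝ (Set.range g) with hE
  haveI : FiniteDimensional ℝ E :=
    FiniteDimensional.span_of_finite ℝ (Set.finite_range g)
  set F : V → E := fun x => ⟨g x, Submodule.subset_span (Set.mem_range_self x)⟩ with hF
  have hF0 : ∑ x, F x = 0 := by
    apply Subtype.ext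
    push_cast [hF]
    simpa using hg0
  set S : ℝ := ∑ x, ‖g x‖ ^ 2 with hS
  set T : ℝ := ∑ x, ∑ y, M x y * ⟪g x, g y⟫ with hT
  have hSnn : 0 ≤ S := Finset.sum_nonneg fun x _ => by positivity
  have hTS : T ≤ lam * S := by
    have := key_spectral M lam hgap F hF0
    have hcoeF : ∀ x y, ⟪F x, F y⟫ = ⟪g x, g y⟫ := fun x y => rfl
    have hnF : ∀ x, ‖F x‖ = ‖g x‖ := fun x => rfl
    simpa [hT, hS, hcoeF, hnF] using this
  -- inner product sums
  have hsum_inner : ∑ x, ∑ y, ⟪g x, g y⟫ = 0 := by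
    have : ∑ x, ∑ y, ⟪g x, g y⟫ = ⟪∑ x, g x, ∑ y, g y⟫ := by
      rw [sum_inner]
      exact Finset.sum_congr rfl fun x _ => by rw [inner_sum]
    rw [this, hg0, inner_zero_left]
  have hA : ∑ x, ∑ y, ‖f x - f y‖ ^ 2 = 2 * n * S := by
    have expand : ∀ x y : V, ‖f x - f y‖ ^ 2
        = ‖g x‖ ^ 2 - 2 * ⟪g x, g y⟫ + ‖g y‖ ^ 2 := by
      intro x y; rw [hfg x y]; exact norm_sub_sq_real (g x) (g y)
    calc ∑ x, ∑ y, ‖f x - f y‖ ^ 2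
        = ∑ x, ∑ y, (‖g x‖ ^ 2 - 2 * ⟪g x, g y⟫ + ‖g y‖ ^ 2) := by
          exact Finset.sum_congr rfl fun x _ => Finset.sum_congr rfl fun y _ => expand x y
      _ = 2 * n * S := by
          simp only [Finset.sum_add_distrib, Finset.sum_sub_distrib, ← Finset.mul_sum,
            Finset.sum_const, Finset.card_univ, nsmul_eq_mul]
          rw [hsum_inner, ← hS, ← hn]
          ring
  have hB : ∑ x, ∑ y, M x y * ‖f x - f y‖ ^ 2 = 2 * S - 2 * T := by
    have expand : ∀ x y : V, M x y * ‖f x - f y‖ ^ 2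
        = M x y * ‖g x‖ ^ 2 + M x y * ‖g y‖ ^ 2 - 2 * (M x y * ⟪g x, g y⟫) := by
      intro x y; rw [hfg x y, norm_sub_sq_real]; ring
    calc ∑ x, ∑ y, M x y * ‖f x - f y‖ ^ 2
        = ∑ x, ∑ y, (M x y * ‖g x‖ ^ 2 + M x y * ‖g y‖ ^ 2 - 2 * (M x y * ⟪g x, g y⟫)) :=
          Finset.sum_congr rfl fun x _ => Finset.sum_congr rfl fun y _ => expand x y
      _ = 2 * S - 2 * T := by
          simp only [Finset.sum_add_distrib, Finset.sum_sub_distrib]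
          have h1 : ∑ x, ∑ y, M x y * ‖g x‖ ^ 2 = S := by
            rw [hS]
            refine Finset.sum_congr rfl fun x _ => ?_
            rw [← Finset.sum_mul, hrow, one_mul]
          have h2 : ∑ x, ∑ y, M x y * ‖g y‖ ^ 2 = S := by
            rw [Finset.sum_comm, hS]
            refine Finset.sum_congr rfl fun y _ => ?_
            rw [← Finset.sum_mul]
            rw [show ∑ x, M x y = 1 by rw [← hrow y]; exact Finset.sum_congr rfl fun x _ => hsymm x y]
            rw [one_mul]
          have h3 : ∑ x, ∑ y, 2 * (M x y * ⟪g x, g y⟫) = 2 * T := by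
            rw [hT, Finset.mul_sum]
            exact Finset.sum_congr rfl fun x _ => (Finset.mul_sum _ _ _).symm
          rw [h1, h2, h3]; ring
  rw [hA, hB]
  have h1lam : (0:ℝ) < 1 - lam := by linarith
  rw [show (1:ℝ)/n^2 * (2*n*S) = (2*S)/n by field_simp,
      show (1:ℝ)/(1-lam) * (1/n * (2*S - 2*T)) = (2*S - 2*T)/((1-lam)*n) by field_simp]
  rw [div_le_div_iff₀ hnpos (by positivity)]
  nlinarith
end
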